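/- Let K₁, K₂ ⊆ ℝⁿ be closed sets such that K₁ is derivable on ∂K₁ ∩ ∂K₂, i.e. T_{K₁}(x) = T^a_{K₁}(x) for all x ∈ ∂K₁ ∩ ∂K₂. Let x₀ ∈ ∂K₁ ∩ ∂K₂ and assume the transversality condition (◇): there exist a neighborhood N(x₀) of x₀, c > 0 and α ∈ [0,1) such that for all x₁ ∈ (∂K₁ \ K₂) ∩ N(x₀) and x₂ ∈ (∂K₂ \ K₁) ∩ N(x₀) there exist v₁ ∈ T_{K₁}(x₁) and v₂ ∈ T_{K₂}(x₂) with |(v₁,v₂)| ≤ c·|x₁ − x₂| and x₂ − x₁ ∈ v₁ − v₂ + α·|x₁ − x₂|·𝔹. Then T_{K₁}(x₀) ∩ T_{K₂}(x₀) = T_{K₁ ∩ K₂}(x₀). -/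

import Mathlib

set_option maxHeartbeats 1600000


open MeasureTheory Filter Topology Set
open scoped RealInnerProductSpace

/-- Euclidean space ℝⁿ. -/
abbrev Euc (n : ℕ) := EuclideanSpace ℝ (Fin n)

variable {E : Type*} [NormedAddCommGroup E] [InnerProductSpace ℝ E]

/-- The contingent (Bouligand) cone to `S` at `x`:
`v` belongs to it iff there are sequences `tᵢ → 0⁺` and `vᵢ → v` with `x + tᵢ • vᵢ ∈ S`. -/
def contingentCone (S : Set E) (x : E) : Set E :=
  {v | ∃ t : ℕ → ℝ, ∃ w : ℕ → E,
    (∀ i, 0 < t i) ∧ Tendsto t atTop (𝓝 0) ∧ Tendsto w atTop (𝓝 v) ∧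
    ∀ i, x + t i • w i ∈ S}

/-- The adjacent cone to `S` at `x`:
`v` belongs to it iff for every sequence `tᵢ → 0⁺` there is `vᵢ → v` with `x + tᵢ • vᵢ ∈ S`. -/
def adjacentCone (S : Set E) (x : E) : Set E :=
  {v | ∀ t : ℕ → ℝ, (∀ i, 0 < t i) → Tendsto t atTop (𝓝 0) →
    ∃ w : ℕ → E, Tendsto w atTop (𝓝 v) ∧ ∀ i, x + t i • w i ∈ S}

/-- The Dubovitskiy cone to `S` at `x`. -/
def dubovitskiyCone (S : Set E) (x : E) : Set E :=
  {v | ∀ t : ℕ → ℝ, ∀ w : ℕ → E, (∀ i, 0 < t i) → Tendsto t atTop (𝓝 0) →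
    Tendsto w atTop (𝓝 v) → ∀ᶠ i in atTop, x + t i • w i ∈ interior S}

/-- Lower semicontinuity of a set-valued map at a point along a filter `l`. -/
def SVLowerSemicontinuousAt (F : E → Set E) (l : Filter E) (x : E) : Prop :=
  ∀ U : Set E, IsOpen U → (F x ∩ U).Nonempty → ∀ᶠ y in l, (F y ∩ U).Nonempty

/-- Upper semicontinuity of a set-valued map at a point along a filter `l`. -/
def SVUpperSemicontinuousAt (F : E → Set E) (l : Filter E) (x : E) : Prop :=
  ∀ U : Set E, IsOpen U → F x ⊆ U → ∀ᶠ y in l, F y ⊆ U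

/-- Continuity (lower and upper semicontinuity) of a set-valued map at `x` along `l`. -/
def SVContinuousAt (F : E → Set E) (l : Filter E) (x : E) : Prop :=
  SVLowerSemicontinuousAt F l x ∧ SVUpperSemicontinuousAt F l x

/-- Continuity of a set-valued map. -/
def SVContinuous (F : E → Set E) : Prop := ∀ x, SVContinuousAt F (𝓝 x) x

/-- Local boundedness of a set-valued map. -/
def SVLocallyBounded (F : E → Set E) : Prop :=
  ∀ x : E, ∃ N ∈ 𝓝 x, ∃ M : ℝ, ∀ y ∈ N, ∀ v ∈ F y, ‖v‖ ≤ M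

/-- One-sided local Lipschitz continuity of a set-valued map. -/
def OneSidedLocallyLipschitz (F : E → Set E) : Prop :=
  ∀ N : Set E, N.Nonempty → IsCompact N → ∃ k > 0, ∀ x₁ ∈ N, ∀ x₂ ∈ N,
    ∀ w₁ ∈ F x₁, ∃ w₂ ∈ F x₂, ⟪x₁ - x₂, w₁⟫ ≤ ⟪x₁ - x₂, w₂⟫ + k * ‖x₁ - x₂‖ ^ 2

/-- The standing assumption (SA): `C` closed; `F x` nonempty, closed, convex on `C`;
`F` continuous and one-sided locally Lipschitz. -/
structure StandingAssumption (F : E → Set E) (C : Set E) : Prop where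
  closed_C : IsClosed C
  nonempty_images : ∀ x ∈ C, (F x).Nonempty
  closed_images : ∀ x ∈ C, IsClosed (F x)
  convex_images : ∀ x ∈ C, Convex ℝ (F x)
  continuous : SVContinuous F
  osLipschitz : OneSidedLocallyLipschitz F

/-- Admissible solution domains: `[0,T]` with `T ≥ 0`, or `[0,T)` with `T ∈ (0,∞]`. -/
def IsSolDomain (D : Set ℝ) : Prop :=
  (∃ T : ℝ, 0 ≤ T ∧ D = Icc 0 T) ∨ (∃ T : ℝ, 0 < T ∧ D = Ico 0 T) ∨ D = Ici 0

/-- `φ` is a solution of the constrained differential inclusion `ẋ ∈ F(x)`, `x ∈ C`,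
on the domain `D`: it stays in `C` and is a locally absolutely continuous arc whose
derivative is an integrable selection of `F ∘ φ` almost everywhere. -/
def IsSolution (F : E → Set E) (C : Set E) (D : Set ℝ) (φ : ℝ → E) : Prop :=
  IsSolDomain D ∧ (∀ t ∈ D, φ t ∈ C) ∧
  ∃ g : ℝ → E,
    (∀ᵐ t ∂(volume.restrict D), g t ∈ F (φ t)) ∧
    ∀ t ∈ D, IntervalIntegrable g volume 0 t ∧ φ t = φ 0 + ∫ s in (0:ℝ)..t, g s

/-- Forward invariance of `K` for the constrained differential inclusion. -/
def ForwardInvariant (F : E → Set E) (C K : Set E) : Prop :=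
  ∀ D : Set ℝ, ∀ φ : ℝ → E, IsSolution F C D φ → φ 0 ∈ K → ∀ t ∈ D, φ t ∈ K

/-- The set 𝒫 of critical points: points of `∂K ∩ ∂C` every neighborhood of which
meets `C \ K`. -/
def critSet (K C : Set E) : Set E :=
  {x | x ∈ frontier K ∩ frontier C ∧ ∀ N ∈ 𝓝 x, (N ∩ (C \ K)).Nonempty}

/-- The set of initial speeds `F_φ(x)` of an arc `φ` at `x`. -/
def initialSpeeds (φ : ℝ → E) (x : E) : Set E :=
  {v | ∃ t : ℕ → ℝ, (∀ i, 0 < t i) ∧ Tendsto t atTop (𝓝 0) ∧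
    Tendsto (fun i => (t i)⁻¹ • (φ (t i) - x)) atTop (𝓝 v)}

/-- The metric projection of `y` onto `S`. -/
def projSet (S : Set E) (y : E) : Set E := {z ∈ S | dist y z = Metric.infDist y S}

/-- `φ` leaves `K` immediately: for some `T > 0`, `φ(t) ∈ C \ K` on `(0,T]`. -/
def LeavesImmediately (K C : Set E) (D : Set ℝ) (φ : ℝ → E) : Prop :=
  ∃ T > 0, Ioc 0 T ⊆ D ∧ ∀ t ∈ Ioc 0 T, φ t ∈ C \ K

/-- Property (★): for some `T > 0`, `Proj_{∂K}(φ(t)) ∩ int C ≠ ∅` on `(0,T]`. -/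
def PropStar (K C : Set E) (D : Set ℝ) (φ : ℝ → E) : Prop :=
  ∃ T > 0, Ioc 0 T ⊆ D ∧
    ∀ t ∈ Ioc 0 T, (projSet (frontier K) (φ t) ∩ interior C).Nonempty

/-- Euclidean norm of the concatenated vector `(v₁, v₂) ∈ ℝ²ⁿ`. -/
noncomputable def pairNorm (v₁ v₂ : E) : ℝ := Real.sqrt (‖v₁‖ ^ 2 + ‖v₂‖ ^ 2)

/-- Assumption 1: `F(x) ⊆ T_K(x)` on 𝒫. -/
def Assumption1 (F : E → Set E) (K C : Set E) : Prop :=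
  ∀ x ∈ critSet K C, F x ⊆ contingentCone K x

/-- Assumption 2: `F(x) ∩ T_{∂K ∩ ∂C}(x) = ∅` on 𝒫. -/
def Assumption2 (F : E → Set E) (K C : Set E) : Prop :=
  ∀ x ∈ critSet K C, F x ∩ contingentCone (frontier K ∩ frontier C) x = ∅

/-- Assumption 3 (transversality) at a point `x`. -/
def Assumption3At (K C : Set E) (x : E) : Prop :=
  contingentCone (frontier K) x = adjacentCone (frontier K) x ∧
  contingentCone C x = adjacentCone C x ∧
  ∃ N ∈ 𝓝 x, ∃ c > 0, ∃ α ∈ Ico (0:ℝ) 1,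
    ∀ x₁ ∈ (frontier K \ C) ∩ N, ∀ x₂ ∈ (frontier C \ frontier K) ∩ N,
      ∃ v₁ ∈ contingentCone (frontier K) x₁, ∃ v₂ ∈ contingentCone C x₂,
        pairNorm v₁ v₂ ≤ c * ‖x₁ - x₂‖ ∧ ‖(x₂ - x₁) - (v₁ - v₂)‖ ≤ α * ‖x₁ - x₂‖

/-- Assumption 3 (transversality) on 𝒫. -/
def Assumption3 (K C : Set E) : Prop := ∀ x ∈ critSet K C, Assumption3At K C x

/-- The transversality condition (◇) for a pair of sets at `x₀`. -/
def TransversalAt (K₁ K₂ : Set E) (x₀ : E) : Prop :=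
  ∃ N ∈ 𝓝 x₀, ∃ c > 0, ∃ α ∈ Ico (0:ℝ) 1,
    ∀ x₁ ∈ (frontier K₁ \ K₂) ∩ N, ∀ x₂ ∈ (frontier K₂ \ K₁) ∩ N,
      ∃ v₁ ∈ contingentCone K₁ x₁, ∃ v₂ ∈ contingentCone K₂ x₂,
        pairNorm v₁ v₂ ≤ c * ‖x₁ - x₂‖ ∧ ‖(x₂ - x₁) - (v₁ - v₂)‖ ≤ α * ‖x₁ - x₂‖


section AuxiliaryLemmas

lemma norm_left_le_pairNorm (v₁ v₂ : E) : ‖v₁‖ ≤ pairNorm v₁ v₂ := by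
  have h : ‖v₁‖ ^ 2 ≤ ‖v₁‖ ^ 2 + ‖v₂‖ ^ 2 := le_add_of_nonneg_right (sq_nonneg _)
  have h2 := Real.sqrt_le_sqrt h
  rwa [Real.sqrt_sq (norm_nonneg _)] at h2

lemma norm_right_le_pairNorm (v₁ v₂ : E) : ‖v₂‖ ≤ pairNorm v₁ v₂ := by
  have h : ‖v₂‖ ^ 2 ≤ ‖v₁‖ ^ 2 + ‖v₂‖ ^ 2 := le_add_of_nonneg_left (sq_nonneg _)
  have h2 := Real.sqrt_le_sqrt h
  rwa [Real.sqrt_sq (norm_nonneg _)] at h2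

/-- If `v` is in the contingent cone of `S` at `x` and the "variational" inequality
`‖a‖ - ρ‖u - x‖ ≤ ‖a + (u - x)‖` holds for all `u ∈ S` near `x`, then
`⟪a, v⟫ ≥ -ρ‖a‖‖v‖`. -/
lemma inner_bound_aux {S : Set E} {x a v : E} {ρ δ : ℝ} (hρ : 0 ≤ ρ) (hδ : 0 < δ)
    (hv : v ∈ contingentCone S x)
    (H : ∀ u ∈ S, ‖u - x‖ ≤ δ → ‖a‖ - ρ * ‖u - x‖ ≤ ‖a + (u - x)‖) :
    -(ρ * ‖a‖ * ‖v‖) ≤ ⟪a, v⟫ := by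
  rcases eq_or_ne a 0 with rfl | ha
  · simp
  have hapos : 0 < ‖a‖ := norm_pos_iff.mpr ha
  obtain ⟨t, w, hpos, ht, hw, hmem⟩ := hv
  have h1 : Tendsto (fun i => t i * ‖w i‖) atTop (𝓝 0) := by
    simpa using ht.mul hw.norm
  have hev1 : ∀ᶠ i in atTop, t i * ‖w i‖ < δ := h1.eventually_lt_const hδ
  have h1' : Tendsto (fun i => ρ * (t i * ‖w i‖)) atTop (𝓝 0) := by
    simpa using h1.const_mul ρ
  have hev2 : ∀ᶠ i in atTop, ρ * (t i * ‖w i‖) < ‖a‖ := h1'.eventually_lt_const hapos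
  have keyi : ∀ᶠ i in atTop,
      -(ρ * ‖a‖ * ‖w i‖) - t i * ‖w i‖ ^ 2 / 2 ≤ ⟪a, w i⟫ := by
    filter_upwards [hev1, hev2] with i hi1 hi2
    have hti := hpos i
    have hu : x + t i • w i ∈ S := hmem i
    have hsub : (x + t i • w i) - x = t i • w i := by abel
    have hns : ‖t i • w i‖ = t i * ‖w i‖ := by
      rw [norm_smul, Real.norm_eq_abs, abs_of_pos hti]
    have hH := H _ hu (by rw [hsub, hns]; exact hi1.le)
    rw [hsub, hns] at hH
    have h0 : 0 ≤ ‖a‖ - ρ * (t i * ‖w i‖) := by linarith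
    have hsq : (‖a‖ - ρ * (t i * ‖w i‖)) ^ 2 ≤ ‖a + t i • w i‖ ^ 2 := by
      have := mul_self_le_mul_self h0 hH
      nlinarith [this]
    have hexp : ‖a + t i • w i‖ ^ 2
        = ‖a‖ ^ 2 + 2 * (t i * ⟪a, w i⟫) + (t i * ‖w i‖) ^ 2 := by
      rw [norm_add_sq_real, real_inner_smul_right, hns]
    have h3 : (2 * t i) * (-(ρ * ‖a‖ * ‖w i‖) - t i * ‖w i‖ ^ 2 / 2)
        ≤ (2 * t i) * ⟪a, w i⟫ := by nlinarith [hsq, hexp, sq_nonneg (ρ * (t i * ‖w i‖))]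
    exact le_of_mul_le_mul_left h3 (by positivity)
  have hf : Tendsto (fun i => -(ρ * ‖a‖ * ‖w i‖) - t i * ‖w i‖ ^ 2 / 2) atTop
      (𝓝 (-(ρ * ‖a‖ * ‖v‖))) := by
    have hA : Tendsto (fun i => ρ * ‖a‖ * ‖w i‖) atTop (𝓝 (ρ * ‖a‖ * ‖v‖)) :=
      hw.norm.const_mul _
    have hB : Tendsto (fun i => t i * ‖w i‖ ^ 2 / 2) atTop (𝓝 0) := by
      have := (ht.mul (hw.norm.pow 2)).div_const 2
      simpa using this
    have := hA.neg.sub hB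
    simpa using this
  have hg : Tendsto (fun i => ⟪a, w i⟫) atTop (𝓝 ⟪a, v⟫) :=
    tendsto_const_nhds.inner hw
  exact le_of_tendsto_of_tendsto hf hg keyi

end AuxiliaryLemmas

/-- The key metric lemma: under transversality, points of `K₁` and `K₂` near `x₀`
admit a nearby common point of `K₁ ∩ K₂`, at distance linear in their separation. -/
lemma key_lemma {n : ℕ} (K₁ K₂ : Set (Euc n)) (hK₁ : IsClosed K₁) (hK₂ : IsClosed K₂)
    (x₀ : Euc n) (htrans : TransversalAt K₁ K₂ x₀) :
    ∃ R' > 0, ∃ A > 0, ∀ y ∈ K₁, ∀ z ∈ K₂, ‖y - x₀‖ ≤ R' → ‖z - x₀‖ ≤ R' →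
      ∃ p ∈ K₁ ∩ K₂, ‖p - y‖ ≤ A * ‖y - z‖ := by
  obtain ⟨N, hN, c, hc, α, hα, P⟩ := htrans
  obtain ⟨hα0, hα1⟩ := hα
  obtain ⟨R, hR, hRN⟩ := Metric.nhds_basis_closedBall.mem_iff.mp hN
  set ρ : ℝ := (1 - α) / (4 * (c + 1)) with hρdef
  have h4c : (0:ℝ) < 4 * (c + 1) := by linarith
  have hρ : 0 < ρ := div_pos (by linarith) h4c
  have hρc : ρ * (4 * (c + 1)) = 1 - α := div_mul_cancel₀ _ (ne_of_gt h4c)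
  have hρ1 : ρ < 1 := by rw [hρdef, div_lt_one h4c]; nlinarith
  refine ⟨ρ * R / 6, by positivity, 1 / ρ + 1, by positivity, ?_⟩
  intro y hy z hz hyR hzR
  set d := ‖y - z‖ with hd
  have hd0 : 0 ≤ d := norm_nonneg _
  have hdle : d ≤ ρ * R / 3 := by
    have h1 : ‖y - z‖ ≤ ‖y - x₀‖ + ‖z - x₀‖ := by
      calc ‖y - z‖ = ‖(y - x₀) - (z - x₀)‖ := by rw [sub_sub_sub_cancel_right]
        _ ≤ ‖y - x₀‖ + ‖z - x₀‖ := norm_sub_le _ _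
    linarith
  have hR'leR : ρ * R / 6 ≤ R := by nlinarith
  have hyB : y ∈ Metric.closedBall x₀ R := mem_closedBall_iff_norm.mpr (hyR.trans hR'leR)
  have hzB : z ∈ Metric.closedBall x₀ R := mem_closedBall_iff_norm.mpr (hzR.trans hR'leR)
  set X : Set (Euc n × Euc n) :=
    (K₁ ∩ Metric.closedBall x₀ R) ×ˢ (K₂ ∩ Metric.closedBall x₀ R) with hX
  have hXc : IsCompact X :=
    ((isCompact_closedBall x₀ R).inter_left hK₁).prod
      ((isCompact_closedBall x₀ R).inter_left hK₂)
  set g : Euc n × Euc n → ℝ :=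
    fun q => ‖q.1 - q.2‖ + ρ * (‖q.1 - y‖ + ‖q.2 - z‖) with hg
  have hgc : Continuous g := by
    apply Continuous.add
    · exact (continuous_fst.sub continuous_snd).norm
    · exact continuous_const.mul ((continuous_fst.sub continuous_const).norm.add
        ((continuous_snd.sub continuous_const).norm))
  have hne : X.Nonempty := ⟨(y, z), ⟨hy, hyB⟩, ⟨hz, hzB⟩⟩
  obtain ⟨⟨yh, zh⟩, hqX, hqmin'⟩ := hXc.exists_isMinOn hne hgc.continuousOn
  have hqmin : ∀ q' ∈ X, g (yh, zh) ≤ g q' := fun q' hq' => hqmin' hq'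
  have hyhK : yh ∈ K₁ := hqX.1.1
  have hzhK : zh ∈ K₂ := hqX.2.1
  have hgyz : g (yh, zh) ≤ d := by
    have := hqmin (y, z) ⟨⟨hy, hyB⟩, ⟨hz, hzB⟩⟩
    simpa [hg, sub_self] using this
  have hgexp : g (yh, zh) = ‖yh - zh‖ + ρ * (‖yh - y‖ + ‖zh - z‖) := rfl
  have hyhy : ρ * ‖yh - y‖ ≤ d := by
    have := norm_nonneg (yh - zh); have := norm_nonneg (zh - z)
    nlinarith [mul_nonneg hρ.le (norm_nonneg (zh - z))]
  have hzhz : ρ * ‖zh - z‖ ≤ d := by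
    have := norm_nonneg (yh - zh); have := norm_nonneg (yh - y)
    nlinarith [mul_nonneg hρ.le (norm_nonneg (yh - y))]
  have hyhyd : ‖yh - y‖ ≤ R / 3 := by
    rw [← mul_le_mul_iff_right₀ hρ]; calc ρ * ‖yh - y‖ ≤ d := hyhy
      _ ≤ ρ * R / 3 := hdle
      _ = ρ * (R / 3) := by ring
  have hzhzd : ‖zh - z‖ ≤ R / 3 := by
    rw [← mul_le_mul_iff_right₀ hρ]; calc ρ * ‖zh - z‖ ≤ d := hzhz
      _ ≤ ρ * R / 3 := hdle
      _ = ρ * (R / 3) := by ring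
  have hyhx₀ : ‖yh - x₀‖ ≤ R / 2 := by
    have h1 : ‖yh - x₀‖ ≤ ‖yh - y‖ + ‖y - x₀‖ := by
      calc ‖yh - x₀‖ = ‖(yh - y) + (y - x₀)‖ := by rw [sub_add_sub_cancel]
        _ ≤ _ := norm_add_le _ _
    nlinarith
  have hzhx₀ : ‖zh - x₀‖ ≤ R / 2 := by
    have h1 : ‖zh - x₀‖ ≤ ‖zh - z‖ + ‖z - x₀‖ := by
      calc ‖zh - x₀‖ = ‖(zh - z) + (z - x₀)‖ := by rw [sub_add_sub_cancel]
        _ ≤ _ := norm_add_le _ _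
    nlinarith
  have hyhyA : ‖yh - y‖ ≤ (1 / ρ + 1) * d := by
    rw [← mul_le_mul_iff_right₀ hρ]
    calc ρ * ‖yh - y‖ ≤ d := hyhy
      _ ≤ ρ * ((1 / ρ + 1) * d) := by
          rw [show ρ * ((1 / ρ + 1) * d) = (ρ * (1/ρ)) * d + ρ * d by ring,
            mul_one_div_cancel (ne_of_gt hρ)]
          nlinarith
  by_cases hy2 : yh ∈ K₂
  · exact ⟨yh, ⟨hyhK, hy2⟩, hyhyA⟩
  by_cases hz1 : zh ∈ K₁
  · refine ⟨zh, ⟨hz1, hzhK⟩, ?_⟩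
    have h1 : ‖zh - y‖ ≤ ‖zh - z‖ + ‖z - y‖ := by
      calc ‖zh - y‖ = ‖(zh - z) + (z - y)‖ := by rw [sub_add_sub_cancel]
        _ ≤ _ := norm_add_le _ _
    have h2 : ‖z - y‖ = d := by rw [hd, norm_sub_rev]
    have h3 : ‖zh - z‖ ≤ (1 / ρ) * d := by
      rw [← mul_le_mul_iff_right₀ hρ]
      calc ρ * ‖zh - z‖ ≤ d := hzhz
        _ = ρ * (1 / ρ * d) := by field_simp
    linarith
  exfalso
  have hqmin2 : ∀ u₁ u₂, (u₁, u₂) ∈ X →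
      ‖yh - zh‖ + ρ * (‖yh - y‖ + ‖zh - z‖) ≤ ‖u₁ - u₂‖ + ρ * (‖u₁ - y‖ + ‖u₂ - z‖) :=
    fun u₁ u₂ h => hqmin (u₁, u₂) h
  have hnee : yh ≠ zh := fun h => hy2 (h ▸ hzhK)
  have hdd : 0 < ‖yh - zh‖ := norm_pos_iff.mpr (sub_ne_zero_of_ne hnee)
  -- yh is on the frontier of K₁
  have hfr₁ : yh ∈ frontier K₁ := by
    rw [hK₁.frontier_eq]
    refine ⟨hyhK, fun hint => ?_⟩
    obtain ⟨ε, hε, hball⟩ := Metric.isOpen_iff.mp isOpen_interior yh hint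
    set τ := min (1/2 : ℝ) (ε / (2 * ‖yh - zh‖)) with hτdef
    have hτ0 : 0 < τ := lt_min (by norm_num) (by positivity)
    have hτ1 : τ ≤ 1/2 := min_le_left _ _
    have hτε : τ * ‖yh - zh‖ < ε := by
      have h1 : τ ≤ ε / (2 * ‖yh - zh‖) := min_le_right _ _
      rw [le_div_iff₀ (by positivity : (0:ℝ) < 2 * ‖yh - zh‖)] at h1
      nlinarith
    set u := yh + τ • (zh - yh) with hu
    have huK : u ∈ K₁ := by
      apply interior_subset
      apply hball
      rw [Metric.mem_ball, dist_eq_norm]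
      have h0 : u - yh = τ • (zh - yh) := by rw [hu]; abel
      rw [h0, norm_smul, Real.norm_eq_abs, abs_of_pos hτ0, norm_sub_rev zh yh]
      exact hτε
    have huB : u ∈ Metric.closedBall x₀ R := by
      rw [mem_closedBall_iff_norm]
      have hid : u - x₀ = (1 - τ) • (yh - x₀) + τ • (zh - x₀) := by
        rw [hu]; module
      rw [hid]
      calc ‖(1 - τ) • (yh - x₀) + τ • (zh - x₀)‖
          ≤ ‖(1 - τ) • (yh - x₀)‖ + ‖τ • (zh - x₀)‖ := norm_add_le _ _
        _ = (1 - τ) * ‖yh - x₀‖ + τ * ‖zh - x₀‖ := by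
            rw [norm_smul, norm_smul, Real.norm_eq_abs, Real.norm_eq_abs,
              abs_of_nonneg (by linarith), abs_of_pos hτ0]
        _ ≤ (1 - τ) * (R / 2) + τ * (R / 2) := by
            apply add_le_add
            · exact mul_le_mul_of_nonneg_left hyhx₀ (by linarith)
            · exact mul_le_mul_of_nonneg_left hzhx₀ hτ0.le
        _ ≤ R := by nlinarith
    have hcmp := hqmin2 u zh ⟨⟨huK, huB⟩, hqX.2⟩
    have h1 : ‖u - zh‖ = (1 - τ) * ‖yh - zh‖ := by
      have h0 : u - zh = (1 - τ) • (yh - zh) := by rw [hu]; module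
      rw [h0, norm_smul, Real.norm_eq_abs, abs_of_nonneg (by linarith)]
    have h2 : ‖u - y‖ ≤ ‖yh - y‖ + τ * ‖yh - zh‖ := by
      have hid : u - y = (yh - y) + τ • (zh - yh) := by rw [hu]; abel
      rw [hid]
      calc ‖(yh - y) + τ • (zh - yh)‖ ≤ ‖yh - y‖ + ‖τ • (zh - yh)‖ := norm_add_le _ _
        _ = ‖yh - y‖ + τ * ‖yh - zh‖ := by
            rw [norm_smul, Real.norm_eq_abs, abs_of_pos hτ0, norm_sub_rev zh yh]
    nlinarith [hcmp, h1, h2, mul_le_mul_of_nonneg_left h2 hρ.le, mul_pos hτ0 hdd, hρ1]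
  -- zh is on the frontier of K₂
  have hfr₂ : zh ∈ frontier K₂ := by
    rw [hK₂.frontier_eq]
    refine ⟨hzhK, fun hint => ?_⟩
    obtain ⟨ε, hε, hball⟩ := Metric.isOpen_iff.mp isOpen_interior zh hint
    set τ := min (1/2 : ℝ) (ε / (2 * ‖yh - zh‖)) with hτdef
    have hτ0 : 0 < τ := lt_min (by norm_num) (by positivity)
    have hτ1 : τ ≤ 1/2 := min_le_left _ _
    have hτε : τ * ‖yh - zh‖ < ε := by
      have h1 : τ ≤ ε / (2 * ‖yh - zh‖) := min_le_right _ _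
      rw [le_div_iff₀ (by positivity : (0:ℝ) < 2 * ‖yh - zh‖)] at h1
      nlinarith
    set u := zh + τ • (yh - zh) with hu
    have huK : u ∈ K₂ := by
      apply interior_subset
      apply hball
      rw [Metric.mem_ball, dist_eq_norm]
      have h0 : u - zh = τ • (yh - zh) := by rw [hu]; abel
      rw [h0, norm_smul, Real.norm_eq_abs, abs_of_pos hτ0]
      exact hτε
    have huB : u ∈ Metric.closedBall x₀ R := by
      rw [mem_closedBall_iff_norm]
      have hid : u - x₀ = (1 - τ) • (zh - x₀) + τ • (yh - x₀) := by
        rw [hu]; module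
      rw [hid]
      calc ‖(1 - τ) • (zh - x₀) + τ • (yh - x₀)‖
          ≤ ‖(1 - τ) • (zh - x₀)‖ + ‖τ • (yh - x₀)‖ := norm_add_le _ _
        _ = (1 - τ) * ‖zh - x₀‖ + τ * ‖yh - x₀‖ := by
            rw [norm_smul, norm_smul, Real.norm_eq_abs, Real.norm_eq_abs,
              abs_of_nonneg (by linarith), abs_of_pos hτ0]
        _ ≤ (1 - τ) * (R / 2) + τ * (R / 2) := by
            apply add_le_add
            · exact mul_le_mul_of_nonneg_left hzhx₀ (by linarith)
            · exact mul_le_mul_of_nonneg_left hyhx₀ hτ0.le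
        _ ≤ R := by nlinarith
    have hcmp := hqmin2 yh u ⟨hqX.1, ⟨huK, huB⟩⟩
    have h1 : ‖yh - u‖ = (1 - τ) * ‖yh - zh‖ := by
      have h0 : yh - u = (1 - τ) • (yh - zh) := by rw [hu]; module
      rw [h0, norm_smul, Real.norm_eq_abs, abs_of_nonneg (by linarith)]
    have h2 : ‖u - z‖ ≤ ‖zh - z‖ + τ * ‖yh - zh‖ := by
      have hid : u - z = (zh - z) + τ • (yh - zh) := by rw [hu]; abel
      rw [hid]
      calc ‖(zh - z) + τ • (yh - zh)‖ ≤ ‖zh - z‖ + ‖τ • (yh - zh)‖ := norm_add_le _ _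
        _ = ‖zh - z‖ + τ * ‖yh - zh‖ := by
            rw [norm_smul, Real.norm_eq_abs, abs_of_pos hτ0]
    nlinarith [hcmp, h1, h2, mul_le_mul_of_nonneg_left h2 hρ.le, mul_pos hτ0 hdd, hρ1]
  -- apply transversality
  have hyhmem : yh ∈ (frontier K₁ \ K₂) ∩ N :=
    ⟨⟨hfr₁, hy2⟩, hRN (mem_closedBall_iff_norm.mpr (by linarith))⟩
  have hzhmem : zh ∈ (frontier K₂ \ K₁) ∩ N :=
    ⟨⟨hfr₂, hz1⟩, hRN (mem_closedBall_iff_norm.mpr (by linarith))⟩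
  obtain ⟨v₁, hv₁, v₂, hv₂, hpair, herr⟩ := P yh hyhmem zh hzhmem
  have hva : ‖v₁‖ ≤ c * ‖yh - zh‖ := le_trans (norm_left_le_pairNorm v₁ v₂) hpair
  have hvb : ‖v₂‖ ≤ c * ‖yh - zh‖ := le_trans (norm_right_le_pairNorm v₁ v₂) hpair
  -- variational inequalities and inner product bounds
  have H₁ : ∀ u ∈ K₁, ‖u - yh‖ ≤ R / 2 →
      ‖yh - zh‖ - ρ * ‖u - yh‖ ≤ ‖(yh - zh) + (u - yh)‖ := by
    intro u huK hud
    have huB : u ∈ Metric.closedBall x₀ R := by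
      rw [mem_closedBall_iff_norm]
      have h1 : ‖u - x₀‖ ≤ ‖u - yh‖ + ‖yh - x₀‖ := by
        calc ‖u - x₀‖ = ‖(u - yh) + (yh - x₀)‖ := by rw [sub_add_sub_cancel]
          _ ≤ _ := norm_add_le _ _
      linarith
    have hcmp := hqmin2 u zh ⟨⟨huK, huB⟩, hqX.2⟩
    have h1 : (yh - zh) + (u - yh) = u - zh := by abel
    rw [h1]
    have h2 : ‖u - y‖ ≤ ‖yh - y‖ + ‖u - yh‖ := by
      calc ‖u - y‖ = ‖(yh - y) + (u - yh)‖ := by congr 1; abel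
        _ ≤ _ := norm_add_le _ _
    nlinarith [hcmp, mul_le_mul_of_nonneg_left h2 hρ.le]
  have H₂ : ∀ u ∈ K₂, ‖u - zh‖ ≤ R / 2 →
      ‖-(yh - zh)‖ - ρ * ‖u - zh‖ ≤ ‖-(yh - zh) + (u - zh)‖ := by
    intro u huK hud
    have huB : u ∈ Metric.closedBall x₀ R := by
      rw [mem_closedBall_iff_norm]
      have h1 : ‖u - x₀‖ ≤ ‖u - zh‖ + ‖zh - x₀‖ := by
        calc ‖u - x₀‖ = ‖(u - zh) + (zh - x₀)‖ := by rw [sub_add_sub_cancel]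
          _ ≤ _ := norm_add_le _ _
      linarith
    have hcmp := hqmin2 yh u ⟨hqX.1, ⟨huK, huB⟩⟩
    have h1 : -(yh - zh) + (u - zh) = u - yh := by abel
    rw [h1, norm_neg, norm_sub_rev u yh]
    have h2 : ‖u - z‖ ≤ ‖zh - z‖ + ‖u - zh‖ := by
      calc ‖u - z‖ = ‖(zh - z) + (u - zh)‖ := by congr 1; abel
        _ ≤ _ := norm_add_le _ _
    nlinarith [hcmp, mul_le_mul_of_nonneg_left h2 hρ.le]
  have hi₁ : -(ρ * ‖yh - zh‖ * ‖v₁‖) ≤ ⟪yh - zh, v₁⟫ :=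
    inner_bound_aux hρ.le (by linarith : (0:ℝ) < R / 2) hv₁ H₁
  have hi₂' : -(ρ * ‖-(yh - zh)‖ * ‖v₂‖) ≤ ⟪-(yh - zh), v₂⟫ :=
    inner_bound_aux hρ.le (by linarith : (0:ℝ) < R / 2) hv₂ H₂
  rw [norm_neg, inner_neg_left] at hi₂'
  -- combine with transversality estimate to get a contradiction
  have herr' : ‖(v₁ - v₂) - (zh - yh)‖ ≤ α * ‖yh - zh‖ := by
    rw [norm_sub_rev]; exact herr
  have hsplit : ⟪yh - zh, v₁ - v₂⟫
      = ⟪yh - zh, zh - yh⟫ + ⟪yh - zh, (v₁ - v₂) - (zh - yh)⟫ := by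
    rw [← inner_add_right]; congr 1; abel
  have hinner_a : ⟪yh - zh, zh - yh⟫ = -(‖yh - zh‖ ^ 2) := by
    have h1 : zh - yh = -(yh - zh) := by abel
    rw [h1, inner_neg_right, real_inner_self_eq_norm_sq]
  have hCS : ⟪yh - zh, (v₁ - v₂) - (zh - yh)⟫ ≤ ‖yh - zh‖ * (α * ‖yh - zh‖) := by
    calc ⟪yh - zh, (v₁ - v₂) - (zh - yh)⟫
        ≤ ‖yh - zh‖ * ‖(v₁ - v₂) - (zh - yh)‖ := real_inner_le_norm _ _
      _ ≤ ‖yh - zh‖ * (α * ‖yh - zh‖) := mul_le_mul_of_nonneg_left herr' hdd.le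
  have hup : ⟪yh - zh, v₁⟫ - ⟪yh - zh, v₂⟫
      ≤ -(‖yh - zh‖ ^ 2) + ‖yh - zh‖ * (α * ‖yh - zh‖) := by
    have h0 := hsplit
    rw [inner_sub_right] at h0
    linarith [hCS, hinner_a.le, hinner_a.ge, h0.le, h0.ge]
  have hb₁ : ρ * ‖yh - zh‖ * ‖v₁‖ ≤ ρ * ‖yh - zh‖ * (c * ‖yh - zh‖) :=
    mul_le_mul_of_nonneg_left hva (by positivity)
  have hb₂ : ρ * ‖yh - zh‖ * ‖v₂‖ ≤ ρ * ‖yh - zh‖ * (c * ‖yh - zh‖) :=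
    mul_le_mul_of_nonneg_left hvb (by positivity)
  nlinarith [hi₁, hi₂', hup, hb₁, hb₂, hρc, mul_pos hdd hdd,
    mul_pos hρ (mul_pos hdd hdd), hc, hα1]

/-- Under derivability of `K₁` on `∂K₁ ∩ ∂K₂` and the transversality
condition (◇) at `x₀`, `T_{K₁}(x₀) ∩ T_{K₂}(x₀) = T_{K₁ ∩ K₂}(x₀)`. -/
theorem contingent_cone_intersection {n : ℕ} (K₁ K₂ : Set (Euc n))
    (hK₁ : IsClosed K₁) (hK₂ : IsClosed K₂)
    (hder : ∀ x ∈ frontier K₁ ∩ frontier K₂, contingentCone K₁ x = adjacentCone K₁ x)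
    (x₀ : Euc n) (hx₀ : x₀ ∈ frontier K₁ ∩ frontier K₂)
    (htrans : TransversalAt K₁ K₂ x₀) :
    contingentCone K₁ x₀ ∩ contingentCone K₂ x₀ = contingentCone (K₁ ∩ K₂) x₀ := by
  apply Subset.antisymm
  · -- hard inclusion
    rintro v ⟨hv₁, hv₂⟩
    have hv₁' : v ∈ adjacentCone K₁ x₀ := (hder x₀ hx₀) ▸ hv₁
    obtain ⟨t, w, hpos, ht, hw, hmem₂⟩ := hv₂
    obtain ⟨u, hu, hmem₁⟩ := hv₁' t hpos ht
    obtain ⟨R', hR', A, hA, hkey⟩ := key_lemma K₁ K₂ hK₁ hK₂ x₀ htrans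
    -- eventually both approximating points are within R' of x₀
    have h1 : Tendsto (fun i => t i * ‖u i‖) atTop (𝓝 0) := by simpa using ht.mul hu.norm
    have h2 : Tendsto (fun i => t i * ‖w i‖) atTop (𝓝 0) := by simpa using ht.mul hw.norm
    have hev : ∀ᶠ i in atTop, t i * ‖u i‖ ≤ R' ∧ t i * ‖w i‖ ≤ R' := by
      filter_upwards [h1.eventually_lt_const hR', h2.eventually_lt_const hR'] with i hi1 hi2
      exact ⟨hi1.le, hi2.le⟩
    obtain ⟨M, hM⟩ := eventually_atTop.mp hev
    set t' : ℕ → ℝ := fun i => t (i + M) with ht'def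
    set u' : ℕ → Euc n := fun i => u (i + M) with hu'def
    set w' : ℕ → Euc n := fun i => w (i + M) with hw'def
    have hpos' : ∀ i, 0 < t' i := fun i => hpos _
    have ht' : Tendsto t' atTop (𝓝 0) := ht.comp (tendsto_add_atTop_nat M)
    have hu' : Tendsto u' atTop (𝓝 v) := hu.comp (tendsto_add_atTop_nat M)
    have hw' : Tendsto w' atTop (𝓝 v) := hw.comp (tendsto_add_atTop_nat M)
    have hps : ∀ i, ∃ p ∈ K₁ ∩ K₂,
        ‖p - (x₀ + t' i • u' i)‖ ≤ A * ‖(x₀ + t' i • u' i) - (x₀ + t' i • w' i)‖ := by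
      intro i
      have hb := hM (i + M) (Nat.le_add_left M i)
      apply hkey _ (hmem₁ (i + M)) _ (hmem₂ (i + M))
      · have : (x₀ + t' i • u' i) - x₀ = t' i • u' i := by abel
        rw [this, norm_smul, Real.norm_eq_abs, abs_of_pos (hpos' i)]
        exact hb.1
      · have : (x₀ + t' i • w' i) - x₀ = t' i • w' i := by abel
        rw [this, norm_smul, Real.norm_eq_abs, abs_of_pos (hpos' i)]
        exact hb.2
    choose p hp hpnorm using hps
    set w'' : ℕ → Euc n := fun i => (t' i)⁻¹ • (p i - x₀) with hw''def
    have hmemf : ∀ i, x₀ + t' i • w'' i ∈ K₁ ∩ K₂ := by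
      intro i
      have : t' i • w'' i = p i - x₀ := by
        rw [hw''def]; exact smul_inv_smul₀ (ne_of_gt (hpos' i)) _
      rw [this]
      simpa using hp i
    have hdist : ∀ i, ‖w'' i - v‖ ≤ A * ‖u' i - w' i‖ + ‖u' i - v‖ := by
      intro i
      have hti := hpos' i
      have hyz : ‖(x₀ + t' i • u' i) - (x₀ + t' i • w' i)‖ = t' i * ‖u' i - w' i‖ := by
        have h0 : (x₀ + t' i • u' i) - (x₀ + t' i • w' i) = t' i • (u' i - w' i) := by
          rw [smul_sub]; abel
        rw [h0, norm_smul, Real.norm_eq_abs, abs_of_pos hti]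
      have e1 : ‖w'' i - u' i‖ ≤ A * ‖u' i - w' i‖ := by
        have hid : w'' i - u' i = (t' i)⁻¹ • (p i - (x₀ + t' i • u' i)) := by
          have h0 : p i - (x₀ + t' i • u' i) = (p i - x₀) - t' i • u' i := by abel
          rw [h0, smul_sub, inv_smul_smul₀ (ne_of_gt hti)]
        rw [hid, norm_smul, Real.norm_eq_abs, abs_of_pos (inv_pos.mpr hti)]
        have hbp := hpnorm i
        rw [hyz] at hbp
        calc (t' i)⁻¹ * ‖p i - (x₀ + t' i • u' i)‖
            ≤ (t' i)⁻¹ * (A * (t' i * ‖u' i - w' i‖)) :=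
              mul_le_mul_of_nonneg_left hbp (inv_pos.mpr hti).le
          _ = (t' i)⁻¹ * t' i * (A * ‖u' i - w' i‖) := by ring
          _ = A * ‖u' i - w' i‖ := by rw [inv_mul_cancel₀ (ne_of_gt hti), one_mul]
      calc ‖w'' i - v‖ = ‖(w'' i - u' i) + (u' i - v)‖ := by rw [sub_add_sub_cancel]
        _ ≤ ‖w'' i - u' i‖ + ‖u' i - v‖ := norm_add_le _ _
        _ ≤ A * ‖u' i - w' i‖ + ‖u' i - v‖ := by linarith
    have huw : Tendsto (fun i => u' i - w' i) atTop (𝓝 0) := by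
      simpa using hu'.sub hw'
    have hb : Tendsto (fun i => A * ‖u' i - w' i‖ + ‖u' i - v‖) atTop (𝓝 0) := by
      have h1 := (huw.norm.const_mul A).add (tendsto_iff_norm_sub_tendsto_zero.mp hu')
      simpa using h1
    have hw''v : Tendsto w'' atTop (𝓝 v) :=
      tendsto_iff_norm_sub_tendsto_zero.mpr (squeeze_zero (fun i => norm_nonneg _) hdist hb)
    exact ⟨t', w'', hpos', ht', hw''v, hmemf⟩
  · rintro v ⟨t, w, hpos, ht, hw, hmem⟩
    exact ⟨⟨t, w, hpos, ht, hw, fun i => (hmem i).1⟩, ⟨t, w, hpos, ht, hw, fun i => (hmem i).2⟩⟩
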